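/- For ω(x) = x^ν e^{−x} with integer ν ≥ 0 and any integer n ≥ 1, the function K(0,y) := (1/((n−1)! ν!)) (1/y) d^{n−1}/dy^{n−1}[y^{n} ω(y)] satisfies ∫_0^∞ K(0,y) dy = 1 and ∫_0^∞ y^m K(0,y) dy = 0 for all 1 ≤ m ≤ n−1. -/

import Mathlib

open MeasureTheory Finset



lemma master (k : ℕ) (b : ℕ → ℝ) :
    ∑ j ∈ Finset.range (k+2), (-1:ℝ)^(k+1+j) * ((k+1).choose j) * b j
    = (∑ i ∈ Finset.range (k+1), (-1:ℝ)^(k+i) * (k.choose i) * b (i+1))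
      - ∑ j ∈ Finset.range (k+1), (-1:ℝ)^(k+j) * (k.choose j) * b j := by
  rw [Finset.sum_range_succ' _ (k+1),
    Finset.sum_range_succ' (fun j => (-1:ℝ)^(k+j) * (k.choose j) * b j) k]
  have h1 : ∀ i ∈ Finset.range (k+1), (-1:ℝ)^(k+1+(i+1)) * ((k+1).choose (i+1)) * b (i+1)
      = (-1:ℝ)^(k+i) * (k.choose i) * b (i+1)
        - (-1:ℝ)^(k+(i+1)) * (k.choose (i+1)) * b (i+1) := by
    intro i _
    rw [Nat.choose_succ_succ]
    push_cast
    ring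
  rw [Finset.sum_congr rfl h1, Finset.sum_sub_distrib,
    Finset.sum_range_succ (fun i => (-1:ℝ)^(k+(i+1)) * ((k.choose (i+1)):ℝ) * b (i+1)) k]
  simp [Nat.choose_succ_self]
  ring

lemma integrableOn_pow_mul_exp_neg (a : ℕ) :
    IntegrableOn (fun y : ℝ => y ^ a * Real.exp (-y)) (Set.Ioi 0) := by
  have h := Real.GammaIntegral_convergent (s := (a:ℝ)+1) (by positivity)
  refine h.congr_fun ?_ measurableSet_Ioi
  intro x hx
  simp only [show (a:ℝ)+1-1 = (a:ℝ) by ring, Real.rpow_natCast]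
  ring

lemma integral_pow_mul_exp_neg (a : ℕ) :
    ∫ y in Set.Ioi (0:ℝ), y ^ a * Real.exp (-y) = a.factorial := by
  have h := Real.Gamma_eq_integral (s := (a:ℝ)+1) (by positivity)
  have h2 : Real.Gamma ((a:ℝ)+1) = a.factorial := by
    exact_mod_cast Real.Gamma_nat_eq_factorial a
  have h3 : ∫ y in Set.Ioi (0:ℝ), y ^ a * Real.exp (-y)
      = ∫ x in Set.Ioi (0:ℝ), Real.exp (-x) * x ^ ((a:ℝ)+1-1) := by
    apply setIntegral_congr_fun measurableSet_Ioi
    intro x hx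
    simp only [show (a:ℝ)+1-1 = (a:ℝ) by ring, Real.rpow_natCast]
    ring
  rw [h3, ← h, h2]


lemma deriv_sum_step (p k : ℕ) (hk : k + 1 ≤ p) (y : ℝ) :
    ∑ j ∈ Finset.range (k+2), (-1:ℝ)^(k+1+j) * ((k+1).choose j) * (p.descFactorial j) * y^(p-j)
    = (∑ j ∈ Finset.range (k+1), (-1:ℝ)^(k+j) * (k.choose j) * (p.descFactorial j) *
        (↑(p-j) * y^(p-j-1)))
      - ∑ j ∈ Finset.range (k+1), (-1:ℝ)^(k+j) * (k.choose j) * (p.descFactorial j) * y^(p-j) := by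
  have hm := master k (fun j => (p.descFactorial j : ℝ) * y^(p-j))
  simp only [← mul_assoc] at hm
  rw [hm]
  congr 1
  apply Finset.sum_congr rfl
  intro i hi
  rw [Nat.descFactorial_succ]
  have : p - (i+1) = p - i - 1 := by omega
  rw [this]
  push_cast
  ring

lemma iteratedDeriv_pow_mul_exp (p : ℕ) : ∀ k, k ≤ p → ∀ y : ℝ,
    iteratedDeriv k (fun u : ℝ => u ^ p * Real.exp (-u)) y
    = (∑ j ∈ Finset.range (k+1),
        (-1:ℝ)^(k+j) * (k.choose j) * (p.descFactorial j) * y^(p-j)) * Real.exp (-y) := by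
  intro k
  induction k with
  | zero => intro _ y; simp
  | succ k ih =>
    intro hk y
    have hfun : iteratedDeriv k (fun u : ℝ => u ^ p * Real.exp (-u))
        = fun y => (∑ j ∈ Finset.range (k+1),
            (-1:ℝ)^(k+j) * (k.choose j) * (p.descFactorial j) * y^(p-j)) * Real.exp (-y) :=
      funext (ih (by omega))
    rw [iteratedDeriv_succ, hfun]
    have hS : HasDerivAt (fun y : ℝ => ∑ j ∈ Finset.range (k+1),
        (-1:ℝ)^(k+j) * (k.choose j) * (p.descFactorial j) * y^(p-j))
        (∑ j ∈ Finset.range (k+1),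
          (-1:ℝ)^(k+j) * (k.choose j) * (p.descFactorial j) * (↑(p-j) * y^(p-j-1))) y := by
      apply HasDerivAt.fun_sum
      intro j hj
      exact (hasDerivAt_pow (p-j) y).const_mul _
    have hE : HasDerivAt (fun y : ℝ => Real.exp (-y)) (-Real.exp (-y)) y := by
      have := (Real.hasDerivAt_exp (-y)).comp y (hasDerivAt_neg y)
      simp only [mul_neg, mul_one] at this
      exact this
    rw [(hS.fun_mul hE).deriv, deriv_sum_step p k hk y]
    ring


lemma comb1 : ∀ k p : ℕ, k < p →
    ∑ j ∈ Finset.range (k+1), (-1:ℝ)^(k+j) * (k.choose j) * (p.descFactorial j) *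
      ((p-1-j).factorial)
    = (k.factorial : ℝ) * ((p-1-k).factorial) := by
  intro k
  induction k with
  | zero => intro p hp; simp
  | succ k ih =>
    intro p hp
    obtain ⟨d, rfl⟩ : ∃ d, p = d + k + 2 := ⟨p - k - 2, by omega⟩
    have hm := master k (fun j => ((d+k+2).descFactorial j : ℝ) * ((d+k+2-1-j).factorial))
    simp only [← mul_assoc] at hm
    rw [hm]
    have h1 : ∀ i ∈ Finset.range (k+1),
        (-1:ℝ)^(k+i) * (k.choose i) * ((d+k+2).descFactorial (i+1)) *
          ((d+k+2-1-(i+1)).factorial)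
        = (d+k+2) * ((-1:ℝ)^(k+i) * (k.choose i) * ((d+k+1).descFactorial i) *
            ((d+k+1-1-i).factorial)) := by
      intro i hi
      have h2 : (d+k+2).descFactorial (i+1) = (d+k+2) * (d+k+1).descFactorial i := by
        have := Nat.succ_descFactorial_succ (d+k+1) i
        simpa using this
      have h3 : d+k+2-1-(i+1) = d+k+1-1-i := by omega
      rw [h2, h3]
      push_cast
      ring
    rw [Finset.sum_congr rfl h1, ← Finset.mul_sum, ih (d+k+1) (by omega),
      ih (d+k+2) (by omega)]
    have e1 : d+k+1-1-k = d := by omega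
    have e2 : d+k+2-1-k = d+1 := by omega
    have e3 : d+k+2-1-(k+1) = d := by omega
    rw [e1, e2, e3, Nat.factorial_succ (d), Nat.factorial_succ k]
    push_cast
    ring

lemma comb2 : ∀ k p q : ℕ, k < p → 1 ≤ q →
    ∑ j ∈ Finset.range (k+1), (-1:ℝ)^(k+j) * (k.choose j) * (p.descFactorial j) *
      (((p-1-j)+q).factorial)
    = (-1:ℝ)^k * ((q-1).descFactorial k) * (((p-1-k)+q).factorial) := by
  intro k
  induction k with
  | zero => intro p q hp hq; simp
  | succ k ih =>
    intro p q hp hq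
    obtain ⟨d, rfl⟩ : ∃ d, p = d + k + 2 := ⟨p - k - 2, by omega⟩
    have hm := master k (fun j => ((d+k+2).descFactorial j : ℝ) * (((d+k+2-1-j)+q).factorial))
    simp only [← mul_assoc] at hm
    rw [hm]
    have h1 : ∀ i ∈ Finset.range (k+1),
        (-1:ℝ)^(k+i) * (k.choose i) * ((d+k+2).descFactorial (i+1)) *
          (((d+k+2-1-(i+1))+q).factorial)
        = (d+k+2) * ((-1:ℝ)^(k+i) * (k.choose i) * ((d+k+1).descFactorial i) *
            (((d+k+1-1-i)+q).factorial)) := by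
      intro i hi
      have h2 : (d+k+2).descFactorial (i+1) = (d+k+2) * (d+k+1).descFactorial i := by
        have := Nat.succ_descFactorial_succ (d+k+1) i
        simpa using this
      have h3 : d+k+2-1-(i+1) = d+k+1-1-i := by omega
      rw [h2, h3]
      push_cast
      ring
    rw [Finset.sum_congr rfl h1, ← Finset.mul_sum, ih (d+k+1) q (by omega) hq,
      ih (d+k+2) q (by omega) hq]
    have e1 : d+k+1-1-k = d := by omega
    have e2 : d+k+2-1-k = d+1 := by omega
    have e3 : d+k+2-1-(k+1) = d := by omega
    rw [e1, e2, e3]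
    -- goal: (d+k+2) * ((-1)^k * descF(q-1,k) * (d+q)!) - (-1)^k * descF(q-1,k) * ((d+1+q)!)
    --     = (-1)^(k+1) * descF(q-1,k+1) * ((d+q)!)
    have hfac : ((d+1+q).factorial : ℝ) = (d+1+q) * (d+q).factorial := by
      have : d+1+q = (d+q)+1 := by omega
      rw [this, Nat.factorial_succ]
      push_cast
      ring
    rw [hfac, Nat.descFactorial_succ]
    -- key: descF(q-1,k) * ((k+1) - q : ℝ) = -((q-1-k : ℕ) : ℝ) * descF(q-1,k)
    have key : (((q-1).descFactorial k : ℝ)) * ((k:ℝ) + 1 - q)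
        = -(((q-1-k : ℕ) : ℝ)) * ((q-1).descFactorial k) := by
      rcases le_or_gt q (k+1) with h | h
      · rcases eq_or_lt_of_le h with h' | h'
        · have : ((q-1-k : ℕ) : ℝ) = 0 := by
            norm_cast; omega
          rw [this]
          have : ((k:ℝ) + 1 - q) = 0 := by
            have : q = k+1 := h'
            rw [this]; push_cast; ring
          rw [this]; ring
        · have : (q-1).descFactorial k = 0 := Nat.descFactorial_of_lt (by omega)
          rw [this]; push_cast; ring
      · have : ((q-1-k : ℕ) : ℝ) = (q:ℝ) - 1 - k := by
          push_cast [Nat.cast_sub (by omega : k ≤ q - 1), Nat.cast_sub (by omega : 1 ≤ q)]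
          ring
        rw [this]; ring
    push_cast at key ⊢
    linear_combination ((-1:ℝ)^k * (((d+q).factorial : ℕ):ℝ)) * key

/-- For the Laguerre weight `ω(y) = y^ν e^{−y}` and `n ≥ 1`, the kernel
`K(0,y) = (1/((n−1)! ν!)) y⁻¹ ∂_y^{n−1}[y^n ω(y)]` integrates to `1` on
`(0,∞)` and is orthogonal to all monomials `y^m`, `1 ≤ m ≤ n−1`. -/
theorem laguerre_kernel_moments (n ν : ℕ) (hn : 1 ≤ n) :
    (∫ y in Set.Ioi (0 : ℝ),
        (1 / ((n - 1).factorial * ν.factorial : ℝ)) * y⁻¹ *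
          iteratedDeriv (n - 1) (fun u => u ^ n * (u ^ ν * Real.exp (-u))) y) = 1 ∧
      ∀ m : ℕ, 1 ≤ m → m ≤ n - 1 →
        (∫ y in Set.Ioi (0 : ℝ),
            y ^ m * ((1 / ((n - 1).factorial * ν.factorial : ℝ)) * y⁻¹ *
              iteratedDeriv (n - 1) (fun u => u ^ n * (u ^ ν * Real.exp (-u))) y)) = 0 := by
  obtain ⟨k, rfl⟩ : ∃ k, n = k + 1 := ⟨n - 1, by omega⟩
  simp only [Nat.add_sub_cancel]
  set p := k + 1 + ν with hp
  have hf : (fun u : ℝ => u ^ (k+1) * (u ^ ν * Real.exp (-u)))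
      = fun u => u ^ p * Real.exp (-u) := by
    funext u
    rw [hp, pow_add]
    ring
  rw [hf]
  have hkp : k < p := by omega
  set C : ℝ := 1 / ((k.factorial : ℝ) * (ν.factorial : ℝ)) with hC
  have hCne : ((k.factorial : ℝ) * (ν.factorial : ℝ)) ≠ 0 := by positivity
  constructor
  · have key : ∀ y ∈ Set.Ioi (0:ℝ),
        C * y⁻¹ * iteratedDeriv k (fun u : ℝ => u ^ p * Real.exp (-u)) y
        = ∑ j ∈ Finset.range (k+1),
            (C * ((-1:ℝ)^(k+j) * (k.choose j) * (p.descFactorial j))) *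
              (y^(p-1-j) * Real.exp (-y)) := by
      intro y hy
      have hy' : (y:ℝ) ≠ 0 := ne_of_gt hy
      rw [iteratedDeriv_pow_mul_exp p k (le_of_lt hkp) y, Finset.sum_mul, Finset.mul_sum]
      apply Finset.sum_congr rfl
      intro j hj
      have hj' : j ≤ k := by simpa [Nat.lt_succ_iff] using hj
      have hpj : p - j = (p-1-j) + 1 := by omega
      rw [hpj, pow_succ]
      field_simp
    rw [setIntegral_congr_fun measurableSet_Ioi key,
      integral_finset_sum _ (fun j _ =>
        ((integrableOn_pow_mul_exp_neg (p-1-j)).const_mul _))]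
    have hterm : ∀ j ∈ Finset.range (k+1),
        (∫ y in Set.Ioi (0:ℝ),
          (C * ((-1:ℝ)^(k+j) * (k.choose j) * (p.descFactorial j))) *
            (y^(p-1-j) * Real.exp (-y)))
        = C * ((-1:ℝ)^(k+j) * (k.choose j) * (p.descFactorial j) * ((p-1-j).factorial)) := by
      intro j _
      rw [integral_const_mul, integral_pow_mul_exp_neg]
      ring
    rw [Finset.sum_congr rfl hterm, ← Finset.mul_sum, comb1 k p hkp]
    have : p - 1 - k = ν := by omega
    rw [this, hC]
    field_simp
  · intro m hm hmk
    have key : ∀ y ∈ Set.Ioi (0:ℝ),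
        y ^ m * (C * y⁻¹ * iteratedDeriv k (fun u : ℝ => u ^ p * Real.exp (-u)) y)
        = ∑ j ∈ Finset.range (k+1),
            (C * ((-1:ℝ)^(k+j) * (k.choose j) * (p.descFactorial j))) *
              (y^((p-1-j)+m) * Real.exp (-y)) := by
      intro y hy
      have hy' : (y:ℝ) ≠ 0 := ne_of_gt hy
      rw [iteratedDeriv_pow_mul_exp p k (le_of_lt hkp) y, Finset.sum_mul, Finset.mul_sum,
        Finset.mul_sum]
      apply Finset.sum_congr rfl
      intro j hj
      have hj' : j ≤ k := by simpa [Nat.lt_succ_iff] using hj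
      have hpj : p - j = (p-1-j) + 1 := by omega
      rw [hpj, pow_succ, pow_add]
      field_simp
      ring
    rw [setIntegral_congr_fun measurableSet_Ioi key,
      integral_finset_sum _ (fun j _ =>
        ((integrableOn_pow_mul_exp_neg ((p-1-j)+m)).const_mul _))]
    have hterm : ∀ j ∈ Finset.range (k+1),
        (∫ y in Set.Ioi (0:ℝ),
          (C * ((-1:ℝ)^(k+j) * (k.choose j) * (p.descFactorial j))) *
            (y^((p-1-j)+m) * Real.exp (-y)))
        = C * ((-1:ℝ)^(k+j) * (k.choose j) * (p.descFactorial j) * (((p-1-j)+m).factorial)) := by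
      intro j _
      rw [integral_const_mul, integral_pow_mul_exp_neg]
      ring
    rw [Finset.sum_congr rfl hterm, ← Finset.mul_sum, comb2 k p m hkp hm]
    have : (m-1).descFactorial k = 0 := Nat.descFactorial_of_lt (by omega)
    rw [this]
    simp
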